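/- Uniqueness theorem: Let Φ₁, Φ₂ : F → C(X) be two calculi on a Banach space X and suppose there exists a set E ⊆ F such that (i) Φ₁(e) = Φ₂(e) ∈ L(X) for all e ∈ E, and (ii) every f ∈ F is anchored in E with respect to Φ₁ (i.e., the set [f]_E = { e ∈ E : ef ∈ E } is an anchor set). Then Φ₁ = Φ₂. -/
import Mathlib


open Filter Topology

variable {F : Type*} [Ring F] [Algebra ℂ F]
variable {X : Type*} [NormedAddCommGroup X] [NormedSpace ℂ X]

/-- `A` is (the graph of) the bounded everywhere-defined operator `T`. -/
def IsBddOp (A : X →ₗ.[ℂ] X) (T : X →L[ℂ] X) : Prop :=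
  ∀ x y : X, (x, y) ∈ A.graph ↔ T x = y

/-- `A` is a bounded (everywhere-defined) operator. -/
def Bdd (A : X →ₗ.[ℂ] X) : Prop := ∃ T : X →L[ℂ] X, IsBddOp A T

/-- A proto-calculus: a map from a unital algebra into closed operators
satisfying (FC1)–(FC3). -/
structure ProtoCalculus (F X : Type*) [Ring F] [Algebra ℂ F]
    [NormedAddCommGroup X] [NormedSpace ℂ X] where
  toFun : F → (X →ₗ.[ℂ] X)
  closed : ∀ f, IsClosed ((toFun f).graph : Set (X × X))
  fc1 : ∀ x y : X, (x, y) ∈ (toFun 1).graph ↔ y = x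
  fc2_smul : ∀ (l : ℂ) (f : F) (x y : X),
    (x, y) ∈ (toFun f).graph → (x, l • y) ∈ (toFun (l • f)).graph
  fc2_add : ∀ (f g : F) (x y z : X),
    (x, y) ∈ (toFun f).graph → (x, z) ∈ (toFun g).graph →
      (x, y + z) ∈ (toFun (f + g)).graph
  fc3_comp : ∀ (f g : F) (x y z : X),
    (x, y) ∈ (toFun g).graph → (y, z) ∈ (toFun f).graph →
      (x, z) ∈ (toFun (f * g)).graph
  fc3_dom : ∀ (f g : F) (x : X),
    (∃ y, (x, y) ∈ (toFun g).graph ∧ ∃ z, (y, z) ∈ (toFun f).graph) ↔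
      (x ∈ (toFun g).domain ∧ x ∈ (toFun (f * g)).domain)

/-- The set of Φ-bounded elements. -/
def ProtoCalculus.BddElems (Φ : ProtoCalculus F X) : Set F := {f | Bdd (Φ.toFun f)}

/-- The set of Φ-regularizers of `f`. -/
def ProtoCalculus.Reg (Φ : ProtoCalculus F X) (f : F) : Set F :=
  {e | Bdd (Φ.toFun e) ∧ Bdd (Φ.toFun (e * f))}

/-- `M` determines `Φ` at `f`:  `Φ(f)x = y` iff `Φ(ef)x = Φ(e)y` for all
`e ∈ M ∩ Reg(f,Φ)`. -/
def ProtoCalculus.Determines (Φ : ProtoCalculus F X) (M : Set F) (f : F) : Prop :=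
  ∀ x y : X, (x, y) ∈ (Φ.toFun f).graph ↔
    ∀ e ∈ M ∩ Φ.Reg f, ∀ z w : X,
      (x, z) ∈ (Φ.toFun (e * f)).graph → (y, w) ∈ (Φ.toFun e).graph → z = w

/-- An anchor set: a nonempty set of Φ-bounded elements with trivial common kernel. -/
def ProtoCalculus.AnchorSet (Φ : ProtoCalculus F X) (M : Set F) : Prop :=
  M.Nonempty ∧ M ⊆ Φ.BddElems ∧
    ∀ x : X, (∀ e ∈ M, (x, (0 : X)) ∈ (Φ.toFun e).graph) → x = 0

/-- `[f]_E = { e ∈ E : e f ∈ E }`. -/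
def Idx (E : Set F) (f : F) : Set F := {e ∈ E | e * f ∈ E}

/-- `E` is an algebraic core: `[f]_E` determines `Φ` at every `f`. -/
def ProtoCalculus.AlgebraicCore (Φ : ProtoCalculus F X) (E : Set F) : Prop :=
  ∀ f : F, Φ.Determines (Idx E f) f

/-- A calculus: a proto-calculus satisfying (FC4). -/
structure Calculus (F X : Type*) [Ring F] [Algebra ℂ F]
    [NormedAddCommGroup X] [NormedSpace ℂ X] extends ProtoCalculus F X where
  fc4 : ∀ f : F, toProtoCalculus.Determines toProtoCalculus.BddElems f

/-! ### Auxiliary lemmas -/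

lemma graph_unique {A : X →ₗ.[ℂ] X} {x y y' : X}
    (h : (x, y) ∈ A.graph) (h' : (x, y') ∈ A.graph) : y = y' := by
  have hsub : ((x, y) - (x, y')) ∈ A.graph := A.graph.sub_mem h h'
  have hsub' : ((0 : X), y - y') ∈ A.graph := by
    simpa [Prod.ext_iff] using hsub
  rw [LinearPMap.mem_graph_iff] at hsub'
  obtain ⟨u, hu1, hu2⟩ := hsub'
  have hu0 : u = 0 := Subtype.ext (by simpa using hu1)
  rw [hu0] at hu2
  simp only [LinearPMap.map_zero] at hu2
  exact sub_eq_zero.mp hu2.symm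

lemma mem_graph_of_isBddOp {A : X →ₗ.[ℂ] X} {T : X →L[ℂ] X}
    (h : IsBddOp A T) (x : X) : (x, T x) ∈ A.graph :=
  (h x (T x)).2 rfl

lemma isBddOp_val {A : X →ₗ.[ℂ] X} {T : X →L[ℂ] X}
    (h : IsBddOp A T) {x y : X} (hxy : (x, y) ∈ A.graph) : T x = y :=
  (h x y).1 hxy

lemma isBddOp_mul (Φ : ProtoCalculus F X) {a b : F} {Ta Tb : X →L[ℂ] X}
    (ha : IsBddOp (Φ.toFun a) Ta) (hb : IsBddOp (Φ.toFun b) Tb) :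
    IsBddOp (Φ.toFun (a * b)) (Ta.comp Tb) := by
  intro x y
  have hm : (x, Ta (Tb x)) ∈ (Φ.toFun (a * b)).graph :=
    Φ.fc3_comp a b x (Tb x) (Ta (Tb x)) (mem_graph_of_isBddOp hb x)
      (mem_graph_of_isBddOp ha (Tb x))
  constructor
  · intro hxy
    exact graph_unique hm hxy
  · rintro rfl
    exact hm

/-- Key one-sided inclusion. -/
lemma key_incl (Φ₁ Φ₂ : Calculus F X) (E : Set F)
    (h1 : ∀ e ∈ E, Φ₁.toFun e = Φ₂.toFun e ∧ Bdd (Φ₁.toFun e))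
    (h2 : ∀ f : F, Φ₁.toProtoCalculus.AnchorSet (Idx E f)) :
    ∀ (f : F) (x y : X), (x, y) ∈ (Φ₁.toFun f).graph → (x, y) ∈ (Φ₂.toFun f).graph := by
  intro f x y hxy
  apply (Φ₂.fc4 f x y).2
  rintro g ⟨hgBdd, hg, hgf⟩ z w hz hw
  obtain ⟨Tg, hTg⟩ := hg
  obtain ⟨Tgf, hTgf⟩ := hgf
  -- z = Tgf x, w = Tg y
  -- anchor via [g*f]_E
  obtain ⟨-, -, hker⟩ := h2 (g * f)
  have main : ∀ e ∈ Idx E (g * f), (z - w, (0 : X)) ∈ (Φ₁.toFun e).graph := by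
    rintro e ⟨heE, hegfE⟩
    obtain ⟨hee, Te, hTe⟩ := h1 e heE
    have hTe₂ : IsBddOp (Φ₂.toFun e) Te := hee ▸ hTe
    obtain ⟨heq2, Tegf, hTegf⟩ := h1 _ hegfE
    have hTegf₂ : IsBddOp (Φ₂.toFun (e * (g * f))) Tegf := heq2 ▸ hTegf
    -- Te z = Tegf x
    have m1 : (x, Te z) ∈ (Φ₂.toFun (e * (g * f))).graph :=
      Φ₂.fc3_comp e (g * f) x z (Te z) hz (mem_graph_of_isBddOp hTe₂ z)
    have e1 : Tegf x = Te z := isBddOp_val hTegf₂ m1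
    -- Te w via e*g
    have m2 : (y, Te w) ∈ (Φ₂.toFun (e * g)).graph :=
      Φ₂.fc3_comp e g y w (Te w) hw (mem_graph_of_isBddOp hTe₂ w)
    -- claim: Tegf x = Te w, via anchor [e*g]_E
    obtain ⟨-, -, hker2⟩ := h2 (e * g)
    have main2 : ∀ e' ∈ Idx E (e * g),
        (Tegf x - Te w, (0 : X)) ∈ (Φ₁.toFun e').graph := by
      rintro e' ⟨he'E, he'egE⟩
      obtain ⟨hee', Te', hTe'⟩ := h1 e' he'E
      have hTe'₂ : IsBddOp (Φ₂.toFun e') Te' := hee' ▸ hTe'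
      obtain ⟨heq3, Teeg, hTeeg⟩ := h1 _ he'egE
      have hTeeg₂ : IsBddOp (Φ₂.toFun (e' * (e * g))) Teeg := heq3 ▸ hTeeg
      -- RHS: Te' (Te w) = Teeg y
      have m3 : (y, Te' (Te w)) ∈ (Φ₂.toFun (e' * (e * g))).graph :=
        Φ₂.fc3_comp e' (e * g) y (Te w) (Te' (Te w)) m2
          (mem_graph_of_isBddOp hTe'₂ (Te w))
      have e2 : Teeg y = Te' (Te w) := isBddOp_val hTeeg₂ m3
      -- LHS via Φ₁.fc4 forward at f with regularizer e'*(e*g)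
      have assoc : (e' * (e * g)) * f = e' * (e * (g * f)) := by
        rw [mul_assoc, mul_assoc]
      have hmul : IsBddOp (Φ₁.toFun (e' * (e * (g * f)))) (Te'.comp Tegf) :=
        isBddOp_mul Φ₁.toProtoCalculus hTe' hTegf
      have hBh : Bdd (Φ₁.toFun (e' * (e * g))) := ⟨Teeg, hTeeg⟩
      have hBhf : Bdd (Φ₁.toFun ((e' * (e * g)) * f)) := by
        rw [assoc]; exact ⟨Te'.comp Tegf, hmul⟩
      have hmem : (e' * (e * g)) ∈
          Φ₁.toProtoCalculus.BddElems ∩ Φ₁.toProtoCalculus.Reg f :=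
        ⟨hBh, hBh, hBhf⟩
      have mzx : (x, Te' (Tegf x)) ∈ (Φ₁.toFun ((e' * (e * g)) * f)).graph := by
        rw [assoc]; exact mem_graph_of_isBddOp hmul x
      have mwy : (y, Teeg y) ∈ (Φ₁.toFun (e' * (e * g))).graph :=
        mem_graph_of_isBddOp hTeeg y
      have e3 : Te' (Tegf x) = Teeg y :=
        (Φ₁.fc4 f x y).1 hxy _ hmem _ _ mzx mwy
      -- combine
      have p1 : (Tegf x, Te' (Tegf x)) ∈ (Φ₁.toFun e').graph :=
        mem_graph_of_isBddOp hTe' (Tegf x)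
      have p2 : (Te w, Te' (Te w)) ∈ (Φ₁.toFun e').graph :=
        mem_graph_of_isBddOp hTe' (Te w)
      have psub := (Φ₁.toFun e').graph.sub_mem p1 p2
      have hzero : Te' (Tegf x) - Te' (Te w) = 0 := by
        rw [e3, e2, sub_self]
      simpa [Prod.ext_iff, hzero] using psub
    have e4 : Tegf x - Te w = 0 := hker2 _ main2
    have e5 : Te z = Te w := by
      rw [← e1]; exact sub_eq_zero.mp e4
    -- now (z - w, 0) ∈ Φ₁(e)
    have q1 : (z, Te z) ∈ (Φ₁.toFun e).graph := mem_graph_of_isBddOp hTe z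
    have q2 : (w, Te w) ∈ (Φ₁.toFun e).graph := mem_graph_of_isBddOp hTe w
    have qsub := (Φ₁.toFun e).graph.sub_mem q1 q2
    have hzero : Te z - Te w = 0 := by rw [e5, sub_self]
    simpa [Prod.ext_iff, hzero] using qsub
  exact sub_eq_zero.mp (hker _ main)

/-- **Uniqueness.** If two calculi agree (with bounded values) on a set
`E` in which every `f ∈ F` is anchored, then they coincide. -/
theorem stmt8 (Φ₁ Φ₂ : Calculus F X) (E : Set F)
    (h1 : ∀ e ∈ E, Φ₁.toFun e = Φ₂.toFun e ∧ Bdd (Φ₁.toFun e))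
    (h2 : ∀ f : F, Φ₁.toProtoCalculus.AnchorSet (Idx E f)) :
    ∀ f : F, Φ₁.toFun f = Φ₂.toFun f := by
  have h1' : ∀ e ∈ E, Φ₂.toFun e = Φ₁.toFun e ∧ Bdd (Φ₂.toFun e) := by
    intro e he
    obtain ⟨heq, hb⟩ := h1 e he
    exact ⟨heq.symm, heq ▸ hb⟩
  have h2' : ∀ f : F, Φ₂.toProtoCalculus.AnchorSet (Idx E f) := by
    intro f
    obtain ⟨hne, hsub, hker⟩ := h2 f
    refine ⟨hne, ?_, ?_⟩
    · intro e he
      exact (h1' e he.1).2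
    · intro x hx
      apply hker x
      intro e he
      rw [(h1 e he.1).1]
      exact hx e he
  intro f
  apply LinearPMap.eq_of_eq_graph
  apply le_antisymm
  · intro p hp
    have := key_incl Φ₁ Φ₂ E h1 h2 f p.1 p.2 (by simpa using hp)
    simpa using this
  · intro p hp
    have := key_incl Φ₂ Φ₁ E h1' h2' f p.1 p.2 (by simpa using hp)
    simpa using this
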